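/- Let (S, 𝒮) be a measurable space, let κ be a Markov kernel on S, let ν be a probability measure on S, and let ε ∈ (0, 1] be such that κ(x, E) ≥ ε·ν(E) for every x ∈ S and every measurable E ⊆ S. Then for any two probability measures μ₁, μ₂ on S, the total variation distance satisfies ‖μ₁κ − μ₂κ‖_TV ≤ (1 − ε)·‖μ₁ − μ₂‖_TV. -/

import Mathlib

open MeasureTheory ProbabilityTheory
open scoped ENNReal

/-- The total variation distance between two measures:
the supremum over measurable sets `E` of `|μ E - ν E|`. -/
noncomputable def tvDist {S : Type*} [MeasurableSpace S] (μ ν : Measure S) : ℝ :=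
  ⨆ E : {E : Set S // MeasurableSet E}, |(μ E.1).toReal - (ν E.1).toReal|

lemma tvDist_bdd {S : Type*} [MeasurableSpace S] (μ₁ μ₂ : Measure S)
    [IsProbabilityMeasure μ₁] [IsProbabilityMeasure μ₂] :
    BddAbove (Set.range fun E : {E : Set S // MeasurableSet E} =>
      |(μ₁ E.1).toReal - (μ₂ E.1).toReal|) := by
  refine ⟨1, ?_⟩
  rintro x ⟨E, rfl⟩
  have h1 : (μ₁ E.1).toReal ≤ 1 := by
    have := prob_le_one (μ := μ₁) (s := E.1)
    simpa using ENNReal.toReal_mono (by simp) this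
  have h2 : (μ₂ E.1).toReal ≤ 1 := by
    have := prob_le_one (μ := μ₂) (s := E.1)
    simpa using ENNReal.toReal_mono (by simp) this
  have h3 : 0 ≤ (μ₁ E.1).toReal := ENNReal.toReal_nonneg
  have h4 : 0 ≤ (μ₂ E.1).toReal := ENNReal.toReal_nonneg
  rw [abs_sub_le_iff]
  constructor <;> linarith

lemma le_tvDist {S : Type*} [MeasurableSpace S] (μ₁ μ₂ : Measure S)
    [IsProbabilityMeasure μ₁] [IsProbabilityMeasure μ₂] {E : Set S} (hE : MeasurableSet E) :
    (μ₁ E).toReal - (μ₂ E).toReal ≤ tvDist μ₁ μ₂ :=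
  le_trans (le_abs_self _) (le_ciSup (tvDist_bdd μ₁ μ₂) ⟨E, hE⟩)

lemma tvDist_comm {S : Type*} [MeasurableSpace S] (μ₁ μ₂ : Measure S) :
    tvDist μ₁ μ₂ = tvDist μ₂ μ₁ := by
  unfold tvDist
  congr 1
  funext E
  exact abs_sub_comm _ _

lemma key_one_sided {S : Type*} [MeasurableSpace S] (κ : Kernel S S) [IsMarkovKernel κ]
    (ν : Measure S) [IsProbabilityMeasure ν] (ε : ℝ) (hε0 : 0 < ε) (hε1 : ε ≤ 1)
    (hmin : ∀ x : S, ∀ E : Set S, MeasurableSet E → ENNReal.ofReal ε * ν E ≤ κ x E)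
    (μ₁ μ₂ : Measure S) [IsProbabilityMeasure μ₁] [IsProbabilityMeasure μ₂]
    {E : Set S} (hE : MeasurableSet E) :
    ((μ₁.bind κ) E).toReal - ((μ₂.bind κ) E).toReal ≤ (1 - ε) * tvDist μ₁ μ₂ := by
  obtain ⟨s, hs, hpos, hneg⟩ := MeasureTheory.hahn_decomposition (μ := μ₁) (ν := μ₂)
  set a : ℝ≥0∞ := ENNReal.ofReal ε * ν E with ha
  set c : ℝ≥0∞ := ENNReal.ofReal (1 - ε) with hc
  have hle : μ₂.restrict s ≤ μ₁.restrict s := by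
    refine Measure.le_iff.2 fun t ht => ?_
    rw [Measure.restrict_apply ht, Measure.restrict_apply ht]
    exact hpos _ (ht.inter hs) Set.inter_subset_right
  have hle' : μ₁.restrict sᶜ ≤ μ₂.restrict sᶜ := by
    refine Measure.le_iff.2 fun t ht => ?_
    rw [Measure.restrict_apply ht, Measure.restrict_apply ht]
    exact hneg _ (ht.inter hs.compl) Set.inter_subset_right
  set ρ : Measure S := μ₁.restrict s - μ₂.restrict s with hρdef
  set ρ' : Measure S := μ₂.restrict sᶜ - μ₁.restrict sᶜ with hρ'def
  have hρ : ρ + μ₂.restrict s = μ₁.restrict s := Measure.sub_add_cancel_of_le hle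
  have hρ' : ρ' + μ₁.restrict sᶜ = μ₂.restrict sᶜ := Measure.sub_add_cancel_of_le hle'
  have hDval : ρ Set.univ = μ₁ s - μ₂ s := by
    rw [hρdef, Measure.sub_apply MeasurableSet.univ hle]
    simp
  have hD'val : ρ' Set.univ = μ₂ sᶜ - μ₁ sᶜ := by
    rw [hρ'def, Measure.sub_apply MeasurableSet.univ hle']
    simp
  have hDD' : ρ' Set.univ = ρ Set.univ := by
    rw [hDval, hD'val, measure_compl hs (measure_ne_top _ _),
      measure_compl hs (measure_ne_top _ _)]
    simp only [measure_univ]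
    have h1 : μ₁ s ≤ 1 := prob_le_one
    have h2 : μ₂ s ≤ 1 := prob_le_one
    have h21 : μ₂ s ≤ μ₁ s := hpos s hs le_rfl
    exact AddLECancellable.tsub_tsub_tsub_cancel_left
      (ENNReal.cancel_of_ne (lt_of_le_of_lt tsub_le_self ENNReal.one_lt_top).ne) h1
  have hmeasκ : Measurable fun x => κ x E := κ.measurable_coe hE
  have hlow : ∀ x, a ≤ κ x E := fun x => hmin x E hE
  have hup : ∀ x, κ x E ≤ a + c := by
    intro x
    have h1 : κ x E + ENNReal.ofReal ε * ν Eᶜ ≤ 1 := by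
      calc κ x E + ENNReal.ofReal ε * ν Eᶜ ≤ κ x E + κ x Eᶜ :=
            add_le_add_right (hmin x Eᶜ hE.compl) _
        _ = 1 := by rw [measure_add_measure_compl hE, measure_univ]
    have h2 : a + c + ENNReal.ofReal ε * ν Eᶜ = 1 := by
      have : a + ENNReal.ofReal ε * ν Eᶜ = ENNReal.ofReal ε := by
        rw [ha, ← mul_add, measure_add_measure_compl hE, measure_univ, mul_one]
      calc a + c + ENNReal.ofReal ε * ν Eᶜ = c + (a + ENNReal.ofReal ε * ν Eᶜ) := by ring
        _ = ENNReal.ofReal (1 - ε) + ENNReal.ofReal ε := by rw [this, hc]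
        _ = 1 := by
            rw [← ENNReal.ofReal_add (by linarith) hε0.le]
            norm_num
    have h3 : κ x E + ENNReal.ofReal ε * ν Eᶜ ≤ a + c + ENNReal.ofReal ε * ν Eᶜ := by
      rw [h2]; exact h1
    exact (ENNReal.add_le_add_iff_right
      (ENNReal.mul_ne_top ENNReal.ofReal_ne_top (measure_ne_top _ _))).1 h3
  have hid : (μ₁.bind κ) E + ∫⁻ x, κ x E ∂ρ' = (μ₂.bind κ) E + ∫⁻ x, κ x E ∂ρ := by
    rw [Measure.bind_apply hE κ.measurable.aemeasurable, Measure.bind_apply hE κ.measurable.aemeasurable]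
    have e1 : ∫⁻ x, κ x E ∂μ₁ = (∫⁻ x, κ x E ∂ρ + ∫⁻ x, κ x E ∂(μ₂.restrict s))
        + ∫⁻ x, κ x E ∂(μ₁.restrict sᶜ) := by
      conv_lhs => rw [← Measure.restrict_add_restrict_compl (μ := μ₁) hs, ← hρ]
      rw [lintegral_add_measure, lintegral_add_measure]
    have e2 : ∫⁻ x, κ x E ∂μ₂ = ∫⁻ x, κ x E ∂(μ₂.restrict s)
        + (∫⁻ x, κ x E ∂ρ' + ∫⁻ x, κ x E ∂(μ₁.restrict sᶜ)) := by
      conv_lhs => rw [← Measure.restrict_add_restrict_compl (μ := μ₂) hs, ← hρ']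
      rw [lintegral_add_measure, lintegral_add_measure]
    rw [e1, e2]; ring
  have hbρ : ∫⁻ x, κ x E ∂ρ ≤ (a + c) * ρ Set.univ := by
    calc ∫⁻ x, κ x E ∂ρ ≤ ∫⁻ _, a + c ∂ρ := lintegral_mono fun x => hup x
      _ = (a + c) * ρ Set.univ := lintegral_const _
  have hbρ' : a * ρ Set.univ ≤ ∫⁻ x, κ x E ∂ρ' := by
    calc a * ρ Set.univ = a * ρ' Set.univ := by rw [hDD']
      _ = ∫⁻ _, a ∂ρ' := (lintegral_const _).symm
      _ ≤ ∫⁻ x, κ x E ∂ρ' := lintegral_mono fun x => hlow x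
  have hDfin : ρ Set.univ ≠ ⊤ := by
    rw [hDval]
    exact (lt_of_le_of_lt tsub_le_self (measure_lt_top μ₁ s)).ne
  have haDfin : a * ρ Set.univ ≠ ⊤ :=
    ENNReal.mul_ne_top (ENNReal.mul_ne_top ENNReal.ofReal_ne_top (measure_ne_top _ _)) hDfin
  have hkey : (μ₁.bind κ) E ≤ (μ₂.bind κ) E + c * ρ Set.univ := by
    have h : (μ₁.bind κ) E + a * ρ Set.univ
        ≤ ((μ₂.bind κ) E + c * ρ Set.univ) + a * ρ Set.univ := by
      calc (μ₁.bind κ) E + a * ρ Set.univ ≤ (μ₁.bind κ) E + ∫⁻ x, κ x E ∂ρ' :=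
            add_le_add_right hbρ' _
        _ = (μ₂.bind κ) E + ∫⁻ x, κ x E ∂ρ := hid
        _ ≤ (μ₂.bind κ) E + (a + c) * ρ Set.univ := add_le_add_right hbρ _
        _ = ((μ₂.bind κ) E + c * ρ Set.univ) + a * ρ Set.univ := by ring
    exact (ENNReal.add_le_add_iff_right haDfin).1 h
  -- pass to real numbers
  have hbfin2 : (μ₂.bind κ) E ≠ ⊤ := by
    rw [Measure.bind_apply hE κ.measurable.aemeasurable]
    have hb : ∫⁻ x, κ x E ∂μ₂ ≤ 1 := by
      calc ∫⁻ x, κ x E ∂μ₂ ≤ ∫⁻ _, 1 ∂μ₂ := lintegral_mono fun x => prob_le_one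
        _ = 1 := by simp
    exact (lt_of_le_of_lt hb ENNReal.one_lt_top).ne
  have hcDfin : c * ρ Set.univ ≠ ⊤ := ENNReal.mul_ne_top ENNReal.ofReal_ne_top hDfin
  have hcD : (c * ρ Set.univ).toReal = (1 - ε) * (ρ Set.univ).toReal := by
    rw [ENNReal.toReal_mul, hc, ENNReal.toReal_ofReal (by linarith)]
  have hDle : (ρ Set.univ).toReal ≤ tvDist μ₁ μ₂ := by
    rw [hDval, ENNReal.toReal_sub_of_le (hpos s hs le_rfl) (measure_ne_top _ _)]
    exact le_tvDist μ₁ μ₂ hs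
  have hmono := ENNReal.toReal_mono (ENNReal.add_ne_top.2 ⟨hbfin2, hcDfin⟩) hkey
  rw [ENNReal.toReal_add hbfin2 hcDfin, hcD] at hmono
  have h1ε : 0 ≤ 1 - ε := by linarith
  have hfin : (1 - ε) * (ρ Set.univ).toReal ≤ (1 - ε) * tvDist μ₁ μ₂ :=
    mul_le_mul_of_nonneg_left hDle h1ε
  linarith

theorem stmt_7 {S : Type*} [MeasurableSpace S] (κ : Kernel S S) [IsMarkovKernel κ]
    (ν : Measure S) [IsProbabilityMeasure ν] (ε : ℝ) (hε0 : 0 < ε) (hε1 : ε ≤ 1)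
    (hmin : ∀ x : S, ∀ E : Set S, MeasurableSet E → ENNReal.ofReal ε * ν E ≤ κ x E)
    (μ₁ μ₂ : Measure S) [IsProbabilityMeasure μ₁] [IsProbabilityMeasure μ₂] :
    tvDist (μ₁.bind κ) (μ₂.bind κ) ≤ (1 - ε) * tvDist μ₁ μ₂ := by
  refine ciSup_le fun E => ?_
  rw [abs_sub_le_iff]
  refine ⟨key_one_sided κ ν ε hε0 hε1 hmin μ₁ μ₂ E.2, ?_⟩
  rw [tvDist_comm μ₁ μ₂]
  exact key_one_sided κ ν ε hε0 hε1 hmin μ₂ μ₁ E.2
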